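/- arXiv:2407.16072 — 3 statements merged into one kernel-verified Lean document; each statement's English description precedes it below -/
import Mathlib

section
/- Let d be a positive integer with gcd(d, p^n − 1) = 1. Then ∑_{τ=0}^{p^n−2} C_d(τ)² = p^{2n} − p^n − 1, where C_d(τ) = ∑_{t=0}^{p^n−2} ω^{Tr(α^{t+τ}) − Tr(α^{dt})}. -/
noncomputable instance (p n : ℕ) [Fact p.Prime] : Fintype (GaloisField p n) :=
  Fintype.ofFinite _

/-- `ω = exp(2πi/p)` raised to (the integer lift of) an element of `F_p`. -/
noncomputable def ew (p : ℕ) (x : ZMod p) : ℂ :=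
  Complex.exp (2 * Real.pi * Complex.I / p) ^ x.val

/-- The absolute trace from `F_{p^n}` to `F_p`. -/
noncomputable def Tr (p n : ℕ) [Fact p.Prime] (x : GaloisField p n) : ZMod p :=
  Algebra.trace (ZMod p) (GaloisField p n) x

section auxew
variable (p : ℕ) [Fact p.Prime]

lemma ew_zero : ew p 0 = 1 := by simp [ew]

lemma ew_add (a b : ZMod p) : ew p (a + b) = ew p a * ew p b := by
  have hp : (p : ℕ) ≠ 0 := (Fact.out : p.Prime).ne_zero
  have hζ := Complex.isPrimitiveRoot_exp p hp
  set ζ := Complex.exp (2 * Real.pi * Complex.I / p) with hζdef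
  have hord : orderOf ζ = p := hζ.eq_orderOf.symm
  show ζ ^ (a + b).val = ζ ^ a.val * ζ ^ b.val
  rw [ZMod.val_add]
  calc ζ ^ ((a.val + b.val) % p) = ζ ^ ((a.val + b.val) % orderOf ζ) := by rw [hord]
    _ = ζ ^ (a.val + b.val) := pow_mod_orderOf ζ _
    _ = ζ ^ a.val * ζ ^ b.val := pow_add ζ _ _

lemma ew_one_ne_one : ew p 1 ≠ 1 := by
  have hp : 1 < p := (Fact.out : p.Prime).one_lt
  have hζ := Complex.isPrimitiveRoot_exp p ((Fact.out : p.Prime).pos).ne'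
  unfold ew
  rw [ZMod.val_one p, pow_one]
  exact hζ.ne_one hp

end auxew

section auxfield
open Finset
variable {F : Type*} [Field F] [Fintype F] [DecidableEq F]

omit [Fintype F] [DecidableEq F] in
lemma pow_inj_of_orderOf {α : F} (hα0 : α ≠ 0) {t s : ℕ}
    (ht : t < orderOf α) (hs : s < orderOf α) (h : α ^ t = α ^ s) : t = s := by
  set u := Units.mk0 α hα0 with hu
  have hcoe : (u : F) = α := rfl
  have hou : orderOf u = orderOf α := by rw [← hcoe, orderOf_units]
  have hut : u ^ t = u ^ s := by
    apply Units.ext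
    simpa [hcoe] using h
  exact pow_injOn_Iio_orderOf (by simpa [hou] using ht) (by simpa [hou] using hs) hut

omit [DecidableEq F] in
lemma orderOf_ne_zero_of_card {α : F} (hα : orderOf α = Fintype.card F - 1) : α ≠ 0 := by
  intro h
  have hN : 0 < Fintype.card F - 1 := by
    have := Fintype.one_lt_card (α := F)
    omega
  have := pow_orderOf_eq_one α
  rw [hα, h, zero_pow hN.ne'] at this
  exact zero_ne_one this

lemma pow_surj_of_orderOf {α : F} (hα : orderOf α = Fintype.card F - 1) {x : F} (hx : x ≠ 0) :
    ∃ t, t < Fintype.card F - 1 ∧ α ^ t = x := by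
  have hα0 : α ≠ 0 := orderOf_ne_zero_of_card hα
  set u := Units.mk0 α hα0 with hu
  have hcoe : (u : F) = α := rfl
  have hou : orderOf u = Fintype.card F - 1 := by rw [← hα, ← hcoe, orderOf_units]
  have hcardu : Nat.card Fˣ = Fintype.card F - 1 := by
    rw [Nat.card_eq_fintype_card, Fintype.card_units]
  have htop : Subgroup.zpowers u = ⊤ := by
    apply Subgroup.eq_top_of_card_eq
    rw [Nat.card_zpowers, hou, hcardu]
  have hx' : Units.mk0 x hx ∈ Subgroup.zpowers u := htop ▸ Subgroup.mem_top _
  obtain ⟨m, hm⟩ := mem_powers_iff_mem_zpowers.mpr hx'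
  have hN : 0 < Fintype.card F - 1 := by
    have := Fintype.one_lt_card (α := F); omega
  refine ⟨m % (Fintype.card F - 1), Nat.mod_lt _ hN, ?_⟩
  have hmod : u ^ (m % (Fintype.card F - 1)) = u ^ m := by
    conv_lhs => rw [← hou]
    exact pow_mod_orderOf u m
  have h2 : u ^ (m % (Fintype.card F - 1)) = Units.mk0 x hx := hmod.trans hm
  calc α ^ (m % (Fintype.card F - 1)) = ((u ^ (m % (Fintype.card F - 1)) : Fˣ) : F) := rfl
    _ = x := by rw [h2]; rfl

lemma sum_pow_orderOf {α : F} (hα : orderOf α = Fintype.card F - 1) (f : F → ℂ) :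
    ∑ t ∈ range (Fintype.card F - 1), f (α ^ t) = (∑ x, f x) - f 0 := by
  have hα0 : α ≠ 0 := orderOf_ne_zero_of_card hα
  rw [← Finset.sum_erase_eq_sub (Finset.mem_univ (0 : F))]
  refine Finset.sum_bij (fun t _ => α ^ t) ?_ ?_ ?_ ?_
  · intro t ht
    exact Finset.mem_erase.mpr ⟨pow_ne_zero _ hα0, Finset.mem_univ _⟩
  · intro t ht s hs h
    exact pow_inj_of_orderOf hα0 (hα ▸ Finset.mem_range.mp ht) (hα ▸ Finset.mem_range.mp hs) h
  · intro x hx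
    obtain ⟨t, ht, h⟩ := pow_surj_of_orderOf hα (Finset.mem_erase.mp hx).1
    exact ⟨t, Finset.mem_range.mpr ht, h⟩
  · intro t ht; rfl

end auxfield

section chi
variable (p n : ℕ) [Fact p.Prime]

/-- The canonical additive character of `F_{p^n}`. -/
noncomputable def chi : AddChar (GaloisField p n) ℂ where
  toFun x := ew p (Tr p n x)
  map_zero_eq_one' := by
    show ew p (Tr p n 0) = 1
    rw [Tr, map_zero, ew_zero]
  map_add_eq_mul' a b := by
    show ew p (Tr p n (a + b)) = ew p (Tr p n a) * ew p (Tr p n b)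
    rw [Tr, Tr, Tr, map_add]; exact ew_add p _ _

lemma chi_apply (x : GaloisField p n) : chi p n x = ew p (Tr p n x) := rfl

lemma chi_sum_eq_zero : ∑ x, chi p n x = 0 := by
  rw [AddChar.sum_eq_zero_iff_ne_zero]
  obtain ⟨x, hx⟩ := Algebra.trace_surjective (ZMod p) (GaloisField p n) 1
  intro h
  have hone : chi p n x = 1 := by rw [h, AddChar.zero_apply]
  rw [chi_apply, Tr, hx] at hone
  exact ew_one_ne_one p hone

end chi

/-- Second power moment of the crosscorrelation:
`∑_τ C_d(τ)² = p^(2n) - p^n - 1`. -/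
theorem crosscorrelation_second_moment (p n : ℕ) [Fact p.Prime] (hn : 1 ≤ n)
    (α : GaloisField p n) (hα : orderOf α = p ^ n - 1)
    (d : ℕ) (hd : 0 < d) (hgcd : Nat.gcd d (p ^ n - 1) = 1) :
    ∑ τ ∈ Finset.range (p ^ n - 1),
        (∑ t ∈ Finset.range (p ^ n - 1),
          ew p (Tr p n (α ^ (t + τ)) - Tr p n (α ^ (d * t)))) ^ 2
      = (p : ℂ) ^ (2 * n) - (p : ℂ) ^ n - 1 := by
  classical
  have hprime : p.Prime := Fact.out
  set N := p ^ n - 1 with hN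
  have hqge : 2 ≤ p ^ n := by
    calc 2 ≤ p := hprime.two_le
    _ = p ^ 1 := (pow_one p).symm
    _ ≤ p ^ n := Nat.pow_le_pow_right hprime.pos hn
  have hcard : Fintype.card (GaloisField p n) = p ^ n := by
    rw [← Nat.card_eq_fintype_card]
    exact GaloisField.card p n (by omega)
  have hNcard : Fintype.card (GaloisField p n) - 1 = N := by rw [hcard]
  have hα' : orderOf α = Fintype.card (GaloisField p n) - 1 := by rw [hα, hNcard]
  have hα0 : α ≠ 0 := orderOf_ne_zero_of_card hα'
  have hNpos : 0 < N := by omega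
  have hsumχ : ∑ x, chi p n x = 0 := chi_sum_eq_zero p n
  have hNC : (N : ℂ) = (p : ℂ) ^ n - 1 := by
    rw [hN]
    push_cast [Nat.cast_sub (by omega : 1 ≤ p ^ n)]
    ring
  -- inner geometric character sum
  have key1 : ∀ c : GaloisField p n, ∑ τ ∈ Finset.range N, chi p n (α ^ τ * c)
      = if c = 0 then (N : ℂ) else -1 := by
    intro c
    have h := sum_pow_orderOf hα' (fun x => chi p n (x * c))
    rw [hNcard] at h
    rw [h, zero_mul, AddChar.map_zero_eq_one]
    by_cases hc : c = 0
    · subst hc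
      simp only [mul_zero, AddChar.map_zero_eq_one, Finset.sum_const, Finset.card_univ,
        nsmul_eq_mul, mul_one, if_pos]
      rw [hcard, hNC]
      push_cast
      ring
    · rw [if_neg hc]
      have hb : ∑ x, chi p n (x * c) = ∑ x, chi p n x :=
        Fintype.sum_bijective (fun x => x * c) (Equiv.mulRight₀ c hc).bijective
          (fun x => chi p n (x * c)) (chi p n) (fun x => rfl)
      rw [hb, hsumχ]; ring
  -- the d-decimated sum
  have hcop : (orderOf α).Coprime d := by
    rw [hα]; exact Nat.coprime_comm.mp hgcd
  have key2 : ∑ t ∈ Finset.range N, chi p n (-(α ^ (d * t))) = -1 := by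
    have hβ : orderOf (α ^ d) = Fintype.card (GaloisField p n) - 1 := by
      rw [hcop.orderOf_pow, hα']
    have h := sum_pow_orderOf hβ (fun x => chi p n (-x))
    rw [hNcard] at h
    have hneg : ∑ x : GaloisField p n, chi p n (-x) = ∑ x : GaloisField p n, chi p n x :=
      Fintype.sum_bijective (fun x : GaloisField p n => -x) neg_involutive.bijective
        (fun x => chi p n (-x)) (chi p n) (fun x => rfl)
    calc ∑ t ∈ Finset.range N, chi p n (-(α ^ (d * t)))
        = ∑ t ∈ Finset.range N, chi p n (-((α ^ d) ^ t)) := by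
          refine Finset.sum_congr rfl fun t _ => ?_
          rw [← pow_mul]
      _ = (∑ x, chi p n (-x)) - chi p n (-0) := h
      _ = -1 := by rw [neg_zero, AddChar.map_zero_eq_one, hneg, hsumχ]; ring
  -- (-1)^d = -1 in F
  have hm1 : ((-1 : GaloisField p n) ^ d) = -1 := by
    rcases hprime.eq_two_or_odd' with hp2 | hpodd
    · subst hp2
      haveI : CharP (GaloisField 2 n) 2 := inferInstance
      simp [CharTwo.neg_eq]
    · have hEvenN : Even N := by
        rw [hN]
        exact Nat.Odd.sub_odd (hpodd.pow) odd_one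
      have hdodd : Odd d := by
        rw [Nat.odd_iff]
        by_contra h
        have h2d : 2 ∣ d := by omega
        have h2N : 2 ∣ N := hEvenN.two_dvd
        have : 2 ∣ Nat.gcd d N := Nat.dvd_gcd h2d h2N
        rw [hgcd] at this
        omega
      exact hdodd.neg_one_pow
  -- rewrite the summand
  have hterm : ∀ τ t : ℕ,
      ew p (Tr p n (α ^ (t + τ)) - Tr p n (α ^ (d * t)))
        = chi p n (α ^ τ * α ^ t) * chi p n (-(α ^ (d * t))) := by
    intro τ t
    have h1 : Tr p n (α ^ (t + τ)) - Tr p n (α ^ (d * t))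
        = Tr p n (α ^ (t + τ)) + Tr p n (-(α ^ (d * t))) := by
      rw [sub_eq_add_neg]
      congr 1
      rw [Tr, Tr, map_neg]
    rw [h1, ew_add, ← chi_apply, ← chi_apply]
    congr 2
    rw [pow_add, mul_comm]
  have hre : ∀ τ t s : ℕ,
      (chi p n (α ^ τ * α ^ t) * chi p n (-(α ^ (d * t))))
        * (chi p n (α ^ τ * α ^ s) * chi p n (-(α ^ (d * s))))
      = (chi p n (-(α ^ (d * t))) * chi p n (-(α ^ (d * s))))
        * chi p n (α ^ τ * (α ^ t + α ^ s)) := by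
    intro τ t s
    rw [mul_add, AddChar.map_add_eq_mul]
    ring
  have hmain : ∑ τ ∈ Finset.range N,
      (∑ t ∈ Finset.range N, ew p (Tr p n (α ^ (t + τ)) - Tr p n (α ^ (d * t)))) ^ 2
      = ∑ t ∈ Finset.range N, ∑ s ∈ Finset.range N,
          (chi p n (-(α ^ (d * t))) * chi p n (-(α ^ (d * s))))
            * (if α ^ t + α ^ s = 0 then (N : ℂ) else -1) := by
    simp only [hterm, pow_two, Finset.sum_mul_sum, hre]
    rw [Finset.sum_comm]
    refine Finset.sum_congr rfl fun t _ => ?_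
    rw [Finset.sum_comm]
    refine Finset.sum_congr rfl fun s _ => ?_
    rw [← Finset.mul_sum, key1 (α ^ t + α ^ s)]
  rw [hmain]
  have hsplit : ∀ t s : ℕ,
      (chi p n (-(α ^ (d * t))) * chi p n (-(α ^ (d * s))))
        * (if α ^ t + α ^ s = 0 then (N : ℂ) else -1)
      = (if α ^ t + α ^ s = 0 then
          (chi p n (-(α ^ (d * t))) * chi p n (-(α ^ (d * s)))) * ((N : ℂ) + 1) else 0)
        - chi p n (-(α ^ (d * t))) * chi p n (-(α ^ (d * s))) := by
    intro t s
    split_ifs <;> ring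
  simp only [hsplit, Finset.sum_sub_distrib]
  have hB : ∑ t ∈ Finset.range N, ∑ s ∈ Finset.range N,
      chi p n (-(α ^ (d * t))) * chi p n (-(α ^ (d * s))) = 1 := by
    rw [← Finset.sum_mul_sum, key2]
    ring
  have hA : ∀ t ∈ Finset.range N, ∑ s ∈ Finset.range N,
      (if α ^ t + α ^ s = 0 then
        (chi p n (-(α ^ (d * t))) * chi p n (-(α ^ (d * s)))) * ((N : ℂ) + 1) else 0)
      = (N : ℂ) + 1 := by
    intro t ht
    obtain ⟨s₀, hs₀N, hs₀⟩ :=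
      pow_surj_of_orderOf hα' (x := -(α ^ t)) (neg_ne_zero.mpr (pow_ne_zero _ hα0))
    rw [hNcard] at hs₀N
    rw [Finset.sum_eq_single_of_mem s₀ (Finset.mem_range.mpr hs₀N)]
    · rw [if_pos (by rw [hs₀]; ring)]
      have hds : α ^ (d * s₀) = -(α ^ (d * t)) := by
        rw [mul_comm d s₀, pow_mul, hs₀, neg_pow, hm1, ← pow_mul, mul_comm t d]
        ring
      have hW : chi p n (-(α ^ (d * t))) * chi p n (-(α ^ (d * s₀))) = 1 := by
        rw [← AddChar.map_add_eq_mul, hds]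
        simp
      rw [hW, one_mul]
    · intro b hb hbne
      rw [if_neg]
      intro hc
      apply hbne
      have hb' : α ^ b = α ^ s₀ := by
        rw [hs₀]
        linear_combination hc
      exact pow_inj_of_orderOf hα0
        (by rw [hα']; exact hNcard ▸ Finset.mem_range.mp hb)
        (by rw [hα']; exact hNcard ▸ hs₀N) hb'
  rw [Finset.sum_congr rfl hA, hB, Finset.sum_const, Finset.card_range, nsmul_eq_mul]
  rw [hNC, two_mul, pow_add]
  ring
end

section
/- Let d be coprime to p^n − 1 and W_d(a) = ∑_{x ∈ F_{p^n}} ω^{Tr(x^d − ax)}. Then for any positive integer l, ∑_{a ∈ F_{p^n}} W_d(a)^l = (p^{2n} N^{(l)} − p^{ln})/(p^n − 1), where N^{(l)} is the number of l-tuples (x_1,…,x_l) ∈ F_{p^n}^l satisfying x_1 + ⋯ + x_l = 0 and x_1^d + ⋯ + x_l^d = 0. -/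
private lemma addChar_map_sum {A M ι : Type*} [AddCommMonoid A] [CommMonoid M]
    (ψ : AddChar A M) (s : Finset ι) (g : ι → A) :
    ψ (∑ i ∈ s, g i) = ∏ i ∈ s, ψ (g i) := by
  classical
  induction s using Finset.induction_on with
  | empty => simp
  | insert _ _ h ih =>
      rw [Finset.sum_insert h, Finset.prod_insert h, ψ.map_add_eq_mul, ih]

/-- The `l`-th power moment of the Walsh transform of `Tr(x^d)` in terms of the
number `N^(l)` of solutions of `x₁+⋯+x_l = 0`, `x₁^d+⋯+x_l^d = 0`. -/
theorem walsh_power_moment (p n : ℕ) [Fact p.Prime] (hn : 1 ≤ n)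
    (d : ℕ) (hd : 0 < d) (hgcd : Nat.gcd d (p ^ n - 1) = 1) (l : ℕ) (hl : 1 ≤ l) :
    (∑ a : GaloisField p n,
        (∑ x : GaloisField p n, ew p (Tr p n (x ^ d - a * x))) ^ l)
      = ((p : ℂ) ^ (2 * n) *
            (Nat.card {x : Fin l → GaloisField p n //
              (∑ i, x i) = 0 ∧ (∑ i, (x i) ^ d) = 0} : ℂ)
          - (p : ℂ) ^ (l * n)) / ((p : ℂ) ^ n - 1) := by
  classical
  obtain ⟨m, rfl⟩ : ∃ m, l = m + 1 := ⟨l - 1, (Nat.succ_pred_eq_of_pos hl).symm⟩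
  have hp : p.Prime := Fact.out
  haveI : NeZero p := ⟨hp.ne_zero⟩
  set F := GaloisField p n with hF
  -- the additive character
  have hprim := Complex.isPrimitiveRoot_exp p hp.ne_zero
  have hζ : Complex.exp (2 * Real.pi * Complex.I / p) ^ p = 1 := hprim.pow_eq_one
  set χ : AddChar (ZMod p) ℂ := AddChar.zmodChar p hζ with hχ
  set ψ : AddChar F ℂ :=
    χ.compAddMonoidHom (Algebra.trace (ZMod p) F).toAddMonoidHom with hψdef
  have happ : ∀ z : F, ew p (Tr p n z) = ψ z := fun z => rfl
  have hχprim : χ.IsPrimitive := AddChar.zmodChar_primitive_of_primitive_root p hprim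
  -- nontriviality and primitivity of ψ
  have hψ_ne : ψ ≠ 1 := by
    obtain ⟨b, hb⟩ : ∃ b : F, Algebra.trace (ZMod p) F b ≠ 0 := by
      by_contra hf
      push_neg at hf
      exact Algebra.trace_ne_zero (K := ZMod p) (L := F) (LinearMap.ext hf)
    intro hcontra
    apply hb
    have h1 : ψ b = 1 := by rw [hcontra]; rfl
    have h2 : χ (Algebra.trace (ZMod p) F b) = 1 := h1
    exact (hχprim.zmod_char_eq_one_iff p _).mp h2
  have hψprim : ψ.IsPrimitive := AddChar.IsPrimitive.of_ne_one hψ_ne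
  have horth : ∀ b : F, ∑ x : F, ψ (x * b) = if b = 0 then (Fintype.card F : ℂ) else 0 := by
    intro b
    rw [AddChar.sum_mulShift b hψprim]
    split_ifs <;> simp
  -- cardinalities
  have hqnat : Nat.card F = p ^ n := GaloisField.card p n (by omega)
  have hpn1 : 1 ≤ p ^ n := Nat.one_le_pow _ _ hp.pos
  set Q : ℂ := (p : ℂ) ^ n with hQ
  have hcardF : (Fintype.card F : ℂ) = Q := by
    rw [← Nat.card_eq_fintype_card, hqnat]; push_cast; rfl
  have hQne : Q - 1 ≠ 0 := by
    rw [sub_ne_zero]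
    intro h
    have h2 : ((p ^ n : ℕ) : ℂ) = ((1 : ℕ) : ℂ) := by push_cast; rw [← hQ, h]
    have := Nat.cast_injective h2
    have hlt : 1 < p ^ n := Nat.one_lt_pow (by omega) hp.one_lt
    omega
  -- bijectivity of x ↦ x ^ d
  have hcop : (Nat.card Fˣ).Coprime d := by
    rw [Nat.card_units, hqnat]
    exact Nat.coprime_comm.mp hgcd
  have hinj : Function.Injective fun x : F => x ^ d := by
    intro a b hab
    simp only at hab
    rcases eq_or_ne b 0 with rfl | hb
    · rw [zero_pow hd.ne'] at hab
      exact pow_eq_zero_iff hd.ne' |>.mp hab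
    · have ha : a ≠ 0 := by
        intro h
        apply hb
        rw [h, zero_pow hd.ne'] at hab
        exact pow_eq_zero_iff hd.ne' |>.mp hab.symm
      have hu : Units.mk0 a ha ^ d = Units.mk0 b hb ^ d := by
        ext
        simpa using hab
      have := (powCoprime hcop).injective (by simpa [powCoprime_apply] using hu)
      simpa using congrArg Units.val this
  have hbij : Function.Bijective fun x : F => x ^ d :=
    Finite.injective_iff_bijective.mp hinj
  set e : F ≃ F := Equiv.ofBijective _ hbij with he
  have he_apply : ∀ x : F, e x = x ^ d := fun x => rfl
  have he0 : e 0 = 0 := by rw [he_apply, zero_pow hd.ne']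
  -- notation for the two symmetric sums
  set S0 : Finset (Fin (m + 1) → F) := Finset.univ.filter (fun x => ∑ i, x i = 0) with hS0
  set T : ℂ := ∑ x ∈ S0, ψ (∑ i, (x i) ^ d) with hT
  -- Step A : LHS = Q * T
  have stepA : (∑ a : F, (∑ x : F, ew p (Tr p n (x ^ d - a * x))) ^ (m + 1)) = Q * T := by
    simp only [happ]
    calc
      (∑ a : F, (∑ x : F, ψ (x ^ d - a * x)) ^ (m + 1))
          = ∑ a : F, ∑ x : Fin (m + 1) → F, ψ ((∑ i, (x i) ^ d) + (-a) * ∑ i, x i) := by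
            refine Finset.sum_congr rfl fun a _ => ?_
            rw [Fintype.sum_pow]
            refine Finset.sum_congr rfl fun x _ => ?_
            rw [← addChar_map_sum]
            congr 1
            rw [Finset.sum_sub_distrib, ← Finset.mul_sum]
            ring
      _ = ∑ x : Fin (m + 1) → F, ψ (∑ i, (x i) ^ d) * ∑ a : F, ψ (a * ∑ i, x i) := by
            rw [Finset.sum_comm]
            refine Finset.sum_congr rfl fun x _ => ?_
            rw [Finset.mul_sum]
            rw [← Equiv.sum_comp (Equiv.neg F)
              (fun a => ψ (∑ i, (x i) ^ d) * ψ (a * ∑ i, x i))]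
            refine Finset.sum_congr rfl fun a _ => ?_
            simp only [Equiv.neg_apply]
            rw [← AddChar.map_add_eq_mul]
      _ = ∑ x : Fin (m + 1) → F, ψ (∑ i, (x i) ^ d)
            * (if (∑ i, x i) = 0 then (Fintype.card F : ℂ) else 0) := by
            refine Finset.sum_congr rfl fun x _ => ?_
            rw [horth]
      _ = ∑ x : Fin (m + 1) → F,
            (if (∑ i, x i) = 0 then ψ (∑ i, (x i) ^ d) * Q else 0) := by
            refine Finset.sum_congr rfl fun x _ => ?_
            rw [hcardF, mul_ite, mul_zero]
      _ = ∑ x ∈ S0, ψ (∑ i, (x i) ^ d) * Q := by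
            rw [hS0, Finset.sum_filter]
      _ = Q * T := by rw [← Finset.sum_mul, mul_comm, hT]
  -- scaling invariance of T
  have scaling : ∀ c : F, c ≠ 0 →
      (∑ x ∈ S0, ψ (c ^ d * ∑ i, (x i) ^ d)) = T := by
    intro c hc
    rw [hT]
    refine Finset.sum_nbij' (fun x => fun j => c * x j) (fun x => fun j => c⁻¹ * x j)
      ?_ ?_ ?_ ?_ ?_
    · intro x hx
      rw [hS0, Finset.mem_filter] at hx ⊢
      refine ⟨Finset.mem_univ _, ?_⟩
      rw [← Finset.mul_sum, hx.2, mul_zero]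
    · intro x hx
      rw [hS0, Finset.mem_filter] at hx ⊢
      refine ⟨Finset.mem_univ _, ?_⟩
      rw [← Finset.mul_sum, hx.2, mul_zero]
    · intro x _; funext j; exact inv_mul_cancel_left₀ hc (x j)
    · intro x _; funext j; exact mul_inv_cancel_left₀ hc (x j)
    · intro x _
      congr 1
      rw [Finset.mul_sum]
      exact Finset.sum_congr rfl fun i _ => (mul_pow c (x i) d).symm
  -- Step B : (q - 1) * T = q * N - |S0|
  set N : ℕ := (S0.filter fun x => (∑ i, (x i) ^ d) = 0).card with hNdef
  have hcount : (Finset.univ.erase (0 : F)).card = p ^ n - 1 := by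
    rw [Finset.card_erase_of_mem (Finset.mem_univ _), Finset.card_univ,
      ← Nat.card_eq_fintype_card, hqnat]
  have stepB : ((p ^ n - 1 : ℕ) : ℂ) * T = Q * N - (S0.card : ℂ) := by
    calc
      ((p ^ n - 1 : ℕ) : ℂ) * T = ∑ _c ∈ Finset.univ.erase (0 : F), T := by
        rw [Finset.sum_const, hcount, nsmul_eq_mul]
      _ = ∑ c ∈ Finset.univ.erase (0 : F), ∑ x ∈ S0, ψ (c ^ d * ∑ i, (x i) ^ d) := by
        refine Finset.sum_congr rfl fun c hc => ?_
        exact (scaling c (Finset.mem_erase.mp hc).1).symm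
      _ = ∑ x ∈ S0, ∑ c ∈ Finset.univ.erase (0 : F), ψ (c ^ d * ∑ i, (x i) ^ d) :=
        Finset.sum_comm
      _ = ∑ x ∈ S0, ∑ c ∈ Finset.univ.erase (0 : F), ψ (c * ∑ i, (x i) ^ d) := by
        refine Finset.sum_congr rfl fun x _ => ?_
        have hiff : ∀ c : F, e c = 0 ↔ c = 0 := fun c =>
          ⟨fun h => e.injective (h.trans he0.symm), fun h => by rw [h, he0]⟩
        refine Finset.sum_equiv e (fun c => ?_) (fun c _ => ?_)
        · simp only [Finset.mem_erase, Finset.mem_univ, and_true]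
          exact (not_congr (hiff c)).symm
        · rw [he_apply]
      _ = ∑ x ∈ S0, ((∑ c : F, ψ (c * ∑ i, (x i) ^ d)) - 1) := by
        refine Finset.sum_congr rfl fun x _ => ?_
        rw [← Finset.sum_erase_add Finset.univ _ (Finset.mem_univ (0 : F))]
        simp
      _ = ∑ x ∈ S0, ((if (∑ i, (x i) ^ d) = 0 then (Fintype.card F : ℂ) else 0) - 1) := by
        refine Finset.sum_congr rfl fun x _ => ?_
        rw [horth]
      _ = Q * N - (S0.card : ℂ) := by
        rw [Finset.sum_sub_distrib]
        congr 1
        · rw [← Finset.sum_filter, Finset.sum_const, nsmul_eq_mul, hcardF, hNdef, mul_comm]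
        · simp
  -- |S0| = q ^ m
  have hS0card : (S0.card : ℂ) = Q ^ m := by
    have e1 : {x : Fin (m + 1) → F // (∑ i, x i) = 0} ≃ (Fin m → F) :=
      { toFun := fun x => fun i => x.1 i.succ
        invFun := fun g => ⟨Fin.cons (-∑ i, g i) g, by rw [Fin.sum_univ_succ]; simp⟩
        left_inv := by
          rintro ⟨x, hx⟩
          ext i
          refine Fin.cases ?_ (fun j => ?_) i
          · rw [Fin.sum_univ_succ] at hx
            simp only [Fin.cons_zero]
            linear_combination -hx
          · simp [Fin.cons_succ]
        right_inv := fun g => by funext i; simp [Fin.cons_succ] }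
    have h2 : S0.card = Fintype.card {x : Fin (m + 1) → F // (∑ i, x i) = 0} := by
      rw [Fintype.card_subtype]
    rw [h2, Fintype.card_congr e1, Fintype.card_fun, Fintype.card_fin,
      ← Nat.card_eq_fintype_card, hqnat]
    push_cast
    rw [hQ]
  -- N equals the Nat.card in the statement
  have hNcard : (Nat.card {x : Fin (m + 1) → F //
      (∑ i, x i) = 0 ∧ (∑ i, (x i) ^ d) = 0} : ℂ) = (N : ℂ) := by
    congr 1
    rw [Nat.card_eq_fintype_card, Fintype.card_subtype, hNdef, hS0, Finset.filter_filter]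
  -- final assembly
  rw [stepA, hNcard]
  have hml : (p : ℂ) ^ ((m + 1) * n) = Q ^ (m + 1) := by
    rw [hQ, ← pow_mul, mul_comm]
  have h2n : (p : ℂ) ^ (2 * n) = Q ^ 2 := by
    rw [hQ, ← pow_mul, mul_comm]
  rw [hml, h2n, eq_div_iff hQne]
  have hsub : ((p ^ n - 1 : ℕ) : ℂ) = Q - 1 := by
    rw [Nat.cast_sub hpn1]
    push_cast
    rw [hQ]
  rw [hsub] at stepB
  rw [hS0card] at stepB
  linear_combination Q * stepB
end

section
/- Let n = 2m and d = 4(2^m − 1) + 1. Then gcd(d, 2^n − 1) = 1 if and only if gcd(7, 2^m + 1) = 1, and the polynomial arising from the Niho reduction is g_a(x) = x⁷ + a x⁴ + ā x³ + 1, which is self-conjugate-reciprocal: g_a(x) = 0 if and only if g_a(1/x̄) = 0 for x ≠ 0, where x̄ = x^{2^m}. -/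
instance : Fact (Nat.Prime 2) := ⟨Nat.prime_two⟩

/-- For `d = 4(2^m - 1) + 1` and `n = 2m`: `gcd(d, 2^n - 1) = 1` iff
`gcd(7, 2^m + 1) = 1`; and the Niho polynomial `g_a(x) = x⁷ + a x⁴ + ā x³ + 1`
is self-conjugate-reciprocal: for nonzero `x` (in `F_{2^{2n}}`, with
conjugation `x̄ = x^{2^m}`), `g_a(x) = 0` iff `g_a(1/x̄) = 0`. -/
theorem niho_four_scr (m : ℕ) (hm : 1 ≤ m) :
    (Nat.gcd (4 * (2 ^ m - 1) + 1) (2 ^ (2 * m) - 1) = 1 ↔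
      Nat.gcd 7 (2 ^ m + 1) = 1) ∧
    (∀ a x : GaloisField 2 (4 * m), a ^ (2 ^ (2 * m)) = a → x ≠ 0 →
      (x ^ 7 + a * x ^ 4 + a ^ (2 ^ m) * x ^ 3 + 1 = 0 ↔
        (1 / x ^ (2 ^ m)) ^ 7 + a * (1 / x ^ (2 ^ m)) ^ 4
          + a ^ (2 ^ m) * (1 / x ^ (2 ^ m)) ^ 3 + 1 = 0)) := by
  constructor
  · have ht : 1 ≤ 2 ^ m := Nat.one_le_two_pow
    have hfac : 2 ^ (2 * m) - 1 = (2 ^ m - 1) * (2 ^ m + 1) := by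
      rw [two_mul, pow_add]
      obtain ⟨s, hs⟩ := Nat.exists_eq_add_of_le ht
      rw [hs]
      have : (1 + s) * (1 + s) = s * (s + 2) + 1 := by ring
      rw [this, Nat.add_sub_cancel, show 1 + s - 1 = s from by omega]
      ring
    rw [hfac]
    set t := 2 ^ m with htdef
    have hA : Nat.Coprime (4 * (t - 1) + 1) (t - 1) := by
      rw [← Nat.isCoprime_iff_coprime]
      have e1 : ((4 * (t - 1) + 1 : ℕ) : ℤ) = 1 + ((t - 1 : ℕ) : ℤ) * 4 := by omega
      rw [e1]
      exact isCoprime_one_left.add_mul_left_left 4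
    have hBiff : Nat.Coprime (4 * (t - 1) + 1) (t + 1) ↔ Nat.Coprime 7 (t + 1) := by
      rw [← Nat.isCoprime_iff_coprime, ← Nat.isCoprime_iff_coprime]
      have e2 : ((4 * (t - 1) + 1 : ℕ) : ℤ) = -((7 : ℕ) : ℤ) + ((t + 1 : ℕ) : ℤ) * 4 := by
        omega
      rw [e2]
      constructor
      · intro h
        have h2 := h.add_mul_left_left (-4)
        rw [show (-((7:ℕ):ℤ) + ((t + 1 : ℕ) : ℤ) * 4 + ((t + 1 : ℕ) : ℤ) * (-4))
            = -((7:ℕ):ℤ) by ring] at h2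
        rwa [IsCoprime.neg_left_iff] at h2
      · intro h
        rw [← IsCoprime.neg_left_iff] at h
        exact h.add_mul_left_left 4
    constructor
    · intro h
      exact hBiff.mp (Nat.Coprime.coprime_dvd_right (dvd_mul_left _ _) h)
    · intro h
      exact hA.mul_right (hBiff.mpr h)
  · intro a x ha hx
    set q := 2 ^ m with hqdef
    have hq0 : q ≠ 0 := (Nat.pos_of_ne_zero (by positivity)).ne'
    have frob : ∀ u v : GaloisField 2 (4 * m), (u + v) ^ q = u ^ q + v ^ q :=
      fun u v => add_pow_char_pow u v 2 m
    have haa : (a ^ q) ^ q = a := by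
      rw [← pow_mul, hqdef, ← pow_add, ← two_mul]
      exact ha
    set X := x ^ q with hXdef
    have hX : X ≠ 0 := pow_ne_zero _ hx
    have hexp : (x ^ 7 + a * x ^ 4 + a ^ q * x ^ 3 + 1) ^ q
        = X ^ 7 + a ^ q * X ^ 4 + a * X ^ 3 + 1 := by
      simp only [frob, mul_pow, one_pow]
      rw [pow_right_comm x 7 q, pow_right_comm x 4 q, pow_right_comm x 3 q, haa]
    have hmul : X ^ 7 * ((1 / X) ^ 7 + a * (1 / X) ^ 4 + a ^ q * (1 / X) ^ 3 + 1)
        = X ^ 7 + a ^ q * X ^ 4 + a * X ^ 3 + 1 := by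
      field_simp
      ring
    constructor
    · intro h
      have h7 : X ^ 7 * ((1 / X) ^ 7 + a * (1 / X) ^ 4 + a ^ q * (1 / X) ^ 3 + 1) = 0 := by
        rw [hmul, ← hexp, h, zero_pow hq0]
      rcases mul_eq_zero.mp h7 with h' | h'
      · exact absurd h' (pow_ne_zero _ hX)
      · exact h'
    · intro h
      have h2 : (x ^ 7 + a * x ^ 4 + a ^ q * x ^ 3 + 1) ^ q = 0 := by
        rw [hexp, ← hmul, h, mul_zero]
      exact (pow_eq_zero_iff hq0).mp h2
end
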